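/- Let w = (10,−1,−5,0,3,4), z = (4,3,0,5,1,−10), w' = (10,−5,−1,3,0,4), z' = (4,0,3,1,5,−10) in ℚ⁶, and set A := w·zᵀ and B := w'·z'ᵀ (6×6 rational matrices). Then A·B = B·A = A² = B² = 0, A and B each have rank 1, and for all nonzero rationals s, t the matrix s·A + t·B has rank 2 and satisfies (s·A + t·B)² = 0. -/

import Mathlib

open Matrix

lemma vecMulVec_mul_vecMulVec (a b c d : Fin 6 → ℚ) :
    vecMulVec a b * vecMulVec c d = (b ⬝ᵥ c) • vecMulVec a d := by
  ext i j
  simp only [Matrix.mul_apply, vecMulVec_apply, Matrix.smul_apply, smul_eq_mul, dotProduct,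
    Finset.sum_mul]
  exact Finset.sum_congr rfl fun k _ => by ring


lemma val5a : (![4, 3, 0, 5, 1, -10] : Fin 6 → ℚ) 5 = -10 := rfl
lemma val5b : (![10, -5, -1, 3, 0, 4] : Fin 6 → ℚ) 5 = 4 := rfl
lemma val5c : (![4, 0, 3, 1, 5, -10] : Fin 6 → ℚ) 5 = -10 := rfl
lemma val5d : (![10, -1, -5, 0, 3, 4] : Fin 6 → ℚ) 5 = 4 := rfl

/-- The rank-one monodromy logarithms at the node `p₃` (eq. (5.11)): each generator is of
type I₁ (rank one, square zero), products vanish, and every interior element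
`s·A + t·B` (`s,t ≠ 0`) is of type I₂ (rank two, square zero). -/
theorem stmt_9 (w z w' z' : Fin 6 → ℚ)
    (hw : w = ![10, -1, -5, 0, 3, 4]) (hz : z = ![4, 3, 0, 5, 1, -10])
    (hw' : w' = ![10, -5, -1, 3, 0, 4]) (hz' : z' = ![4, 0, 3, 1, 5, -10])
    (A B : Matrix (Fin 6) (Fin 6) ℚ)
    (hA : A = vecMulVec w z) (hB : B = vecMulVec w' z') :
    A * B = 0 ∧ B * A = 0 ∧ A * A = 0 ∧ B * B = 0 ∧ A.rank = 1 ∧ B.rank = 1 ∧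
      ∀ s t : ℚ, s ≠ 0 → t ≠ 0 →
        (s • A + t • B).rank = 2 ∧ (s • A + t • B) ^ 2 = 0 := by
  have d1 : z ⬝ᵥ w' = 0 := by
    subst hz hw'; norm_num [dotProduct, Fin.sum_univ_six, Matrix.cons_val_two, Matrix.cons_val_three, Matrix.cons_val_four, val5a, val5b]
  have d2 : z' ⬝ᵥ w = 0 := by
    subst hz' hw; norm_num [dotProduct, Fin.sum_univ_six, Matrix.cons_val_two, Matrix.cons_val_three, Matrix.cons_val_four, val5c, val5d]
  have d3 : z ⬝ᵥ w = 0 := by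
    norm_num [hz, hw, dotProduct, Fin.sum_univ_six, Matrix.cons_val_two, Matrix.cons_val_three, Matrix.cons_val_four, val5a, val5d]
  have d4 : z' ⬝ᵥ w' = 0 := by
    norm_num [hz', hw', dotProduct, Fin.sum_univ_six, Matrix.cons_val_two, Matrix.cons_val_three, Matrix.cons_val_four, val5b, val5c]
  have hAB : A * B = 0 := by rw [hA, hB, _root_.vecMulVec_mul_vecMulVec, d1, zero_smul]
  have hBA : B * A = 0 := by rw [hA, hB, _root_.vecMulVec_mul_vecMulVec, d2, zero_smul]
  have hAA : A * A = 0 := by rw [hA, _root_.vecMulVec_mul_vecMulVec, d3, zero_smul]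
  have hBB : B * B = 0 := by rw [hB, _root_.vecMulVec_mul_vecMulVec, d4, zero_smul]
  have hzne : z ≠ 0 := by
    intro h
    have := congrFun h 0
    simp [hz] at this
  have hz'ne : z' ≠ 0 := by
    intro h
    have := congrFun h 0
    simp [hz'] at this
  -- rank of A
  have rankA : A.rank = 1 := by
    rw [Matrix.rank_eq_finrank_span_row]
    have hspan : Submodule.span ℚ (Set.range A) = Submodule.span ℚ {z} := by
      apply le_antisymm
      · rw [Submodule.span_le]
        rintro x ⟨i, rfl⟩
        have : A i = w i • z := by
          funext j; simp [hA, vecMulVec_apply]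
        rw [this]
        exact Submodule.smul_mem _ _ (Submodule.subset_span rfl)
      · rw [Submodule.span_le, Set.singleton_subset_iff]
        have hz10 : z = (10 : ℚ)⁻¹ • A 0 := by
          funext j; simp [hA, vecMulVec_apply, hw]
        rw [hz10]
        exact Submodule.smul_mem _ _ (Submodule.subset_span ⟨0, rfl⟩)
    rw [show Set.range A.row = Set.range A from rfl, hspan, finrank_span_singleton hzne]
  have rankB : B.rank = 1 := by
    rw [Matrix.rank_eq_finrank_span_row]
    have hspan : Submodule.span ℚ (Set.range B) = Submodule.span ℚ {z'} := by
      apply le_antisymm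
      · rw [Submodule.span_le]
        rintro x ⟨i, rfl⟩
        have : B i = w' i • z' := by
          funext j; simp [hB, vecMulVec_apply]
        rw [this]
        exact Submodule.smul_mem _ _ (Submodule.subset_span rfl)
      · rw [Submodule.span_le, Set.singleton_subset_iff]
        have hz10 : z' = (10 : ℚ)⁻¹ • B 0 := by
          funext j; simp [hB, vecMulVec_apply, hw']
        rw [hz10]
        exact Submodule.smul_mem _ _ (Submodule.subset_span ⟨0, rfl⟩)
    rw [show Set.range B.row = Set.range B from rfl, hspan, finrank_span_singleton hz'ne]
  have hli : LinearIndependent ℚ ![z, z'] := by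
    rw [linearIndependent_fin2]
    constructor
    · simpa using hz'ne
    · intro a h
      have h1 := congrFun h 1
      have h2 := congrFun h 2
      simp [hz, hz'] at h1 h2
  refine ⟨hAB, hBA, hAA, hBB, rankA, rankB, fun s t hs ht => ?_⟩
  constructor
  · set M := s • A + t • B with hM
    rw [Matrix.rank_eq_finrank_span_row]
    have hspan : Submodule.span ℚ (Set.range M) =
        Submodule.span ℚ (Set.range ![z, z']) := by
      apply le_antisymm
      · rw [Submodule.span_le]
        rintro x ⟨i, rfl⟩
        have : M i = (s * w i) • z + (t * w' i) • z' := by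
          funext j; simp [hM, hA, hB, vecMulVec_apply]; ring
        rw [this]
        exact Submodule.add_mem _
          (Submodule.smul_mem _ _ (Submodule.subset_span ⟨0, rfl⟩))
          (Submodule.smul_mem _ _ (Submodule.subset_span ⟨1, rfl⟩))
      · rw [Submodule.span_le]
        have hzx : z = (3 * s)⁻¹ • M 4 := by
          funext j
          simp [hM, hA, hB, vecMulVec_apply]; simp [hw, hw']
          field_simp
        have hz'x : z' = (3 * t)⁻¹ • M 3 := by
          funext j
          simp [hM, hA, hB, vecMulVec_apply]; simp [hw, hw']
          field_simp
        have hzm : z ∈ Submodule.span ℚ (Set.range M) := by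
          rw [hzx]
          exact Submodule.smul_mem _ _ (Submodule.subset_span ⟨4, rfl⟩)
        have hz'm : z' ∈ Submodule.span ℚ (Set.range M) := by
          rw [hz'x]
          exact Submodule.smul_mem _ _ (Submodule.subset_span ⟨3, rfl⟩)
        rintro x ⟨i, rfl⟩
        fin_cases i
        · exact hzm
        · exact hz'm
    rw [show Set.range M.row = Set.range M from rfl, hspan, finrank_span_eq_card hli]
    simp
  · rw [sq]
    simp [add_mul, mul_add, Matrix.smul_mul, Matrix.mul_smul, hAB, hBA, hAA, hBB]
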